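/- arXiv:2310.18649 — 2 statements merged into one kernel-verified Lean document; each statement's English description precedes it below -/
import Mathlib

section
/- Supercritical decay estimate: if $\alpha>n/\vartheta$, then for every $\ell>0$, $\mathbf{A}_{p\vartheta}^{\alpha\beta}(\ell\colon\omega,\sigma)\le C\,2^{-\ell(\alpha-n/\vartheta)}\,\mathbf{A}_{p\vartheta}^{\alpha\beta}(\omega,\sigma)$, where $\mathbf{A}_{p\vartheta}^{\alpha\beta}(\ell\colon\omega,\sigma)$ is the bump characteristic restricted to rectangles $Q\times P$ with eccentricity $|Q|^{1/n}/|P|^{1/m}=2^{-\ell}$. -/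
open MeasureTheory ENNReal Set

noncomputable section

abbrev En (n : ℕ) : Type := EuclideanSpace ℝ (Fin n)

/-- The cube in `ℝⁿ` with center `c` and half side-length `h`. -/
def cube {n : ℕ} (c : En n) (h : ℝ) : Set (En n) := {x | ∀ i, |x i - c i| ≤ h}

/-- The dyadic cone `Γ_ℓ(x,y) = {(u,v) : 2^{-ℓ} ≤ |x-u|/|y-v| < 2^{-ℓ+1}}`. -/
def cone {n m : ℕ} (ℓ : ℤ) (x : En n) (y : En m) : Set (En n × En m) :=
  {z | z.2 ≠ y ∧ (2:ℝ) ^ (-ℓ) ≤ ‖x - z.1‖ / ‖y - z.2‖ ∧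
        ‖x - z.1‖ / ‖y - z.2‖ < (2:ℝ) ^ (-ℓ + 1)}

/-- The strong fractional integral kernel `|x-u|^{α-n} |y-v|^{β-m}`. -/
def kern {n m : ℕ} (α β : ℝ) (x : En n) (y : En m) (z : En n × En m) : ℝ≥0∞ :=
  ENNReal.ofReal (‖x - z.1‖ ^ (α - (n:ℝ)) * ‖y - z.2‖ ^ (β - (m:ℝ)))

/-- The strong fractional integral `I_{αβ} f`. -/
def Iab {n m : ℕ} (α β : ℝ) (f : En n × En m → ℝ≥0∞) (x : En n) (y : En m) : ℝ≥0∞ :=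
  ∫⁻ z, f z * kern α β x y z

/-- The cone piece `Δ_ℓ I_{αβ} f`. -/
def DeltaI {n m : ℕ} (α β : ℝ) (ℓ : ℤ) (f : En n × En m → ℝ≥0∞) (x : En n) (y : En m) : ℝ≥0∞ :=
  ∫⁻ z in cone ℓ x y, f z * kern α β x y z

/-- The one-parameter fractional integral of order `α+β` on `ℝ^{n+m}`. -/
def Ione {n m : ℕ} (α β : ℝ) (g : En n × En m → ℝ≥0∞) (x : En n) (y : En m) : ℝ≥0∞ :=
  ∫⁻ z, g z * ENNReal.ofReal ((‖x - z.1‖ ^ 2 + ‖y - z.2‖ ^ 2) ^ ((α + β - (n:ℝ) - (m:ℝ)) / 2))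

/-- `B_{pr}[R](ω,σ)`. -/
def Bloc {n m : ℕ} (p r : ℝ) (ω σ : En n × En m → ℝ≥0∞) (R : Set (En n × En m)) : ℝ≥0∞ :=
  (∫⁻ z in R, ω z ^ (p * r)) ^ (1 / (p * r)) *
  (∫⁻ z in R, (σ z)⁻¹ ^ (p * r / (p - 1))) ^ ((p - 1) / (p * r))

/-- `A_{pr}^{αβ}[Q × P](ω,σ)`. -/
def Aloc (n m : ℕ) (α β p r : ℝ) (ω σ : En n × En m → ℝ≥0∞)
    (Q : Set (En n)) (P : Set (En m)) : ℝ≥0∞ :=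
  volume Q ^ (α / n - 1 / r) * volume P ^ (β / m - 1 / r) * Bloc p r ω σ (Q ×ˢ P)

/-- The multi-parameter `r`-bump characteristic `A_{pr}^{αβ}(ω,σ)`. -/
def Abump (n m : ℕ) (α β p r : ℝ) (ω σ : En n × En m → ℝ≥0∞) : ℝ≥0∞ :=
  ⨆ (cQ : En n) (a : ℝ) (_ : 0 < a) (cP : En m) (b : ℝ) (_ : 0 < b),
    Aloc n m α β p r ω σ (cube cQ a) (cube cP b)

/-- The bump characteristic restricted to eccentricity `|Q|^{1/n}/|P|^{1/m} = 2^{-ℓ}`,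
i.e. rectangles whose `Q`-side is `2^{-ℓ}` times the `P`-side. -/
def AbumpEcc (n m : ℕ) (α β p r : ℝ) (ω σ : En n × En m → ℝ≥0∞) (ℓ : ℤ) : ℝ≥0∞ :=
  ⨆ (cQ : En n) (a : ℝ) (_ : 0 < a) (cP : En m) (b : ℝ) (_ : 0 < b)
    (_ : a = (2:ℝ) ^ (-ℓ) * b),
    Aloc n m α β p r ω σ (cube cQ a) (cube cP b)

/-- Normalized (averaged) localized bump quantity `A_{qr}^{αβ}[R](ω,σ)`. -/
def AlocN (n m : ℕ) (α β q r : ℝ) (ω σ : En n × En m → ℝ≥0∞)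
    (Q : Set (En n)) (P : Set (En m)) : ℝ≥0∞ :=
  volume Q ^ (α / n) * volume P ^ (β / m) *
  ((volume (Q ×ˢ P))⁻¹ * ∫⁻ z in Q ×ˢ P, ω z ^ (q * r)) ^ (1 / (q * r)) *
  ((volume (Q ×ˢ P))⁻¹ * ∫⁻ z in Q ×ˢ P, (σ z)⁻¹ ^ (q * r / (q - 1))) ^ ((q - 1) / (q * r))

lemma volume_cube {n : ℕ} (c : En n) (h : ℝ) :
    volume (cube c h) = ENNReal.ofReal (2*h) ^ n := by
  have hset : cube c h = (MeasurableEquiv.toLp 2 (Fin n → ℝ)).symm ⁻¹'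
      (Set.univ.pi fun i => Icc (c i - h) (c i + h)) := by
    ext x
    simp only [cube, mem_setOf_eq, mem_preimage, mem_pi, mem_univ, forall_true_left, mem_Icc]
    refine forall_congr' fun i => ?_
    show |x i - c i| ≤ h ↔ c i - h ≤ x i ∧ x i ≤ c i + h
    rw [abs_le]
    constructor <;> rintro ⟨h1, h2⟩ <;> exact ⟨by linarith, by linarith⟩
  rw [hset, (EuclideanSpace.volume_preserving_symm_measurableEquiv_toLp (Fin n)).measure_preimage
    ((MeasurableSet.univ_pi fun i => measurableSet_Icc).nullMeasurableSet)]
  rw [volume_pi_pi]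
  have : ∀ i : Fin n, volume (Icc (c i - h) (c i + h)) = ENNReal.ofReal (2*h) := by
    intro i; rw [Real.volume_Icc]; congr 1; ring
  simp [this]

lemma Bloc_mono {n m : ℕ} {p r : ℝ} (hpr : 0 ≤ p * r) (hp1 : 0 ≤ p - 1)
    (ω σ : En n × En m → ℝ≥0∞) {R S : Set (En n × En m)} (hRS : R ⊆ S) :
    Bloc p r ω σ R ≤ Bloc p r ω σ S :=
  mul_le_mul' (ENNReal.rpow_le_rpow (lintegral_mono_set hRS) (div_nonneg zero_le_one hpr))
    (ENNReal.rpow_le_rpow (lintegral_mono_set hRS) (div_nonneg hp1 hpr))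


/-- Supercritical decay: if `α > n/ϑ` then the eccentricity-`2^{-ℓ}` bump
characteristic decays like `2^{-ℓ(α - n/ϑ)}`. -/
theorem stmt7 (n m : ℕ) (hn : 0 < n) (hm : 0 < m) (α β p ϑ : ℝ)
    (hα0 : 0 < α) (hαn : α < n) (hβ0 : 0 < β) (hβm : β < m) (hp : 1 < p) (hϑ : 1 < ϑ)
    (hsup : (n:ℝ) / ϑ < α) (ω σ : En n × En m → ℝ≥0∞)
    (hω : Measurable ω) (hσ : Measurable σ) :
    ∃ C : ℝ≥0∞, 0 < C ∧ C ≠ ⊤ ∧ ∀ ℓ : ℤ, 0 < ℓ →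
      AbumpEcc n m α β p ϑ ω σ ℓ ≤
        C * (2:ℝ≥0∞) ^ (-(ℓ:ℝ) * (α - n / ϑ)) * Abump n m α β p ϑ ω σ := by
  refine ⟨1, one_pos, one_ne_top, fun ℓ hℓ => ?_⟩
  rw [one_mul]
  have hϑ0 : (0:ℝ) < ϑ := by linarith
  have hn0 : (0:ℝ) < n := by exact_mod_cast hn
  refine iSup_le fun cQ => iSup_le fun a => iSup_le fun ha => iSup_le fun cP =>
    iSup_le fun b => iSup_le fun hb => iSup_le fun hab => ?_
  have hab' : a ≤ b := by
    rw [hab]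
    have h1 : (2:ℝ) ^ (-ℓ) ≤ 1 := zpow_le_one_of_nonpos₀ one_le_two (neg_nonpos.mpr hℓ.le)
    have h2 : (0:ℝ) < (2:ℝ) ^ (-ℓ) := zpow_pos zero_lt_two (-ℓ)
    nlinarith
  -- volume identity
  have hvol : volume (cube cQ a) ^ (α / (n:ℝ) - 1 / ϑ) =
      (2:ℝ≥0∞) ^ (-(ℓ:ℝ) * (α - n / ϑ)) * volume (cube cQ b) ^ (α / (n:ℝ) - 1 / ϑ) := by
    rw [volume_cube, volume_cube]
    have h2a : ENNReal.ofReal (2*a) = (2:ℝ≥0∞) ^ (-(ℓ:ℝ)) * ENNReal.ofReal (2*b) := by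
      rw [hab, show 2*((2:ℝ)^(-ℓ)*b) = (2:ℝ)^(-ℓ) * (2*b) by ring,
        ENNReal.ofReal_mul (by positivity)]
      congr 1
      rw [show ((2:ℝ)^(-ℓ) : ℝ) = (2:ℝ) ^ ((-ℓ : ℤ) : ℝ) by rw [Real.rpow_intCast],
        ← ENNReal.ofReal_rpow_of_pos two_pos]
      norm_num
    set e := α / (n:ℝ) - 1 / ϑ with he
    have hXne : ((2:ℝ≥0∞) ^ (-(ℓ:ℝ))) ≠ ⊤ := by
      simp [ENNReal.rpow_eq_top_iff]
    have hne : (n:ℝ) ≠ 0 := ne_of_gt hn0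
    have hϑne : ϑ ≠ 0 := ne_of_gt hϑ0
    calc ((ENNReal.ofReal (2*a)) ^ n) ^ e
        = (((2:ℝ≥0∞) ^ (-(ℓ:ℝ)) * ENNReal.ofReal (2*b)) ^ (n:ℝ)) ^ e := by
          rw [h2a, ENNReal.rpow_natCast]
      _ = ((2:ℝ≥0∞) ^ (-(ℓ:ℝ)) * ENNReal.ofReal (2*b)) ^ ((n:ℝ) * e) := by
          rw [← ENNReal.rpow_mul]
      _ = ((2:ℝ≥0∞) ^ (-(ℓ:ℝ))) ^ ((n:ℝ) * e) * (ENNReal.ofReal (2*b)) ^ ((n:ℝ) * e) := by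
          rw [ENNReal.mul_rpow_of_ne_top hXne ofReal_ne_top]
      _ = (2:ℝ≥0∞) ^ (-(ℓ:ℝ) * (α - n / ϑ)) * ((ENNReal.ofReal (2*b)) ^ n) ^ e := by
          rw [← ENNReal.rpow_mul, ← ENNReal.rpow_natCast (ENNReal.ofReal (2*b)) n,
            ← ENNReal.rpow_mul]
          congr 1
          have hne' : (n:ℝ) * e = α - n / ϑ := by rw [he]; field_simp
          rw [hne']
  calc Aloc n m α β p ϑ ω σ (cube cQ a) (cube cP b)
      ≤ (2:ℝ≥0∞) ^ (-(ℓ:ℝ) * (α - n / ϑ)) * Aloc n m α β p ϑ ω σ (cube cQ b) (cube cP b) := by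
        unfold Aloc
        rw [hvol]
        have hB : Bloc p ϑ ω σ (cube cQ a ×ˢ cube cP b) ≤
            Bloc p ϑ ω σ (cube cQ b ×ˢ cube cP b) := by
          refine Bloc_mono (by positivity) (by linarith) ω σ
            (prod_mono_left fun x hx i => (hx i).trans hab')
        calc (2:ℝ≥0∞) ^ (-(ℓ:ℝ) * (α - n / ϑ)) * volume (cube cQ b) ^ (α / (n:ℝ) - 1 / ϑ) *
              volume (cube cP b) ^ (β / (m:ℝ) - 1 / ϑ) * Bloc p ϑ ω σ (cube cQ a ×ˢ cube cP b)
            ≤ (2:ℝ≥0∞) ^ (-(ℓ:ℝ) * (α - n / ϑ)) * volume (cube cQ b) ^ (α / (n:ℝ) - 1 / ϑ) *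
              volume (cube cP b) ^ (β / (m:ℝ) - 1 / ϑ) *
              Bloc p ϑ ω σ (cube cQ b ×ˢ cube cP b) := mul_le_mul_right hB _
          _ = (2:ℝ≥0∞) ^ (-(ℓ:ℝ) * (α - n / ϑ)) * (volume (cube cQ b) ^ (α / (n:ℝ) - 1 / ϑ) *
              volume (cube cP b) ^ (β / (m:ℝ) - 1 / ϑ) *
              Bloc p ϑ ω σ (cube cQ b ×ˢ cube cP b)) := by ring
    _ ≤ (2:ℝ≥0∞) ^ (-(ℓ:ℝ) * (α - n / ϑ)) * Abump n m α β p ϑ ω σ := by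
        refine mul_le_mul_right ?_ _
        exact le_iSup_of_le cQ (le_iSup_of_le b (le_iSup_of_le hb (le_iSup_of_le cP
          (le_iSup_of_le b (le_iSup_of_le hb le_rfl)))))
end
end

section
/- Bump comparison with exponent gain: suppose for a rectangle $Q\times P$ and $\ell>0$ the ratio bounds $\big(\iint_{Q^\ell\times P}\omega^{pr}\big)^{1/(pr)}\le C 2^{\ell(\alpha-n/r)\lambda_\omega}\big(\iint_{Q\times P}\omega^{pr}\big)^{1/(pr)}$ and $\big(\iint_{Q^\ell\times P}\sigma^{-ps/(p-1)}\big)^{(p-1)/(ps)}\le C 2^{\ell(\alpha-n/s)\mu_\sigma}\big(\iint_{Q\times P}\sigma^{-ps/(p-1)}\big)^{(p-1)/(ps)}$ hold, with $\mu_\omega+\mu_\sigma\ge1$. Then $\mathbf{A}_{pr}^{\alpha\beta}[Q^\ell\times P](\omega,\sigma)\le C'\,2^{-\ell\gamma_\omega}\,\mathbf{A}_{ps}^{\alpha\beta}[Q\times P](\omega,\sigma)$, where $\gamma_\omega=(\mu_\omega-\lambda_\omega)(\alpha-n/r)+n(1/r-1/s)(\mu_\omega-1/p)$. -/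
open MeasureTheory ENNReal Set

noncomputable section

lemma vol_cube (n : ℕ) (c : En n) {h : ℝ} (hh : 0 ≤ h) :
    volume (cube c h) = ENNReal.ofReal (2 * h) ^ n := by
  have hset : cube c h =
      (MeasurableEquiv.toLp 2 (Fin n → ℝ)).symm ⁻¹'
        (Set.univ.pi fun i => Icc (c i - h) (c i + h)) := by
    ext x
    simp only [cube, mem_setOf_eq, mem_preimage, Set.mem_pi, mem_univ, forall_true_left,
      mem_Icc, MeasurableEquiv.toLp_symm_apply]
    constructor
    · intro hx i
      have := abs_le.1 (hx i)
      constructor <;> linarith [this.1, this.2]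
    · intro hx i
      rw [abs_le]
      have := hx i
      constructor <;> linarith [this.1, this.2]
  rw [hset, (EuclideanSpace.volume_preserving_symm_measurableEquiv_toLp (Fin n)).measure_preimage
    (MeasurableSet.univ_pi fun i => measurableSet_Icc).nullMeasurableSet]
  rw [volume_pi_pi]
  rw [Finset.prod_congr rfl (fun i _ => by
    rw [Real.volume_Icc, show c i + h - (c i - h) = 2*h by ring]),
    Finset.prod_const, Finset.card_univ, Fintype.card_fin]

lemma holder_aux {X : Type*} [MeasurableSpace X] (μ : Measure X) (f : X → ℝ≥0∞)
    (hf : Measurable f) {q1 q2 : ℝ} (h0 : 0 < q1) (h12 : q1 < q2) :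
    (∫⁻ x, f x ^ q1 ∂μ) ^ (1/q1) ≤
      (μ Set.univ) ^ (1/q1 - 1/q2) * (∫⁻ x, f x ^ q2 ∂μ) ^ (1/q2) := by
  have hq2 : 0 < q2 := h0.trans h12
  set t := q2 / q1 with ht_def
  have ht : 1 < t := (one_lt_div h0).2 h12
  have ht0 : 0 < t := lt_trans one_pos ht
  have hconj : t.HolderConjugate (Real.conjExponent t) := Real.HolderConjugate.conjExponent ht
  have key := ENNReal.lintegral_mul_le_Lp_mul_Lq μ hconj
      (f := fun x => f x ^ q1) (g := fun _ => (1:ℝ≥0∞))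
      (hf.pow_const q1).aemeasurable aemeasurable_const
  simp only [Pi.mul_apply, mul_one, ENNReal.one_rpow, lintegral_one, lintegral_const,
    one_mul] at key
  have hq1t : ∀ x : ℝ≥0∞, (x ^ q1) ^ t = x ^ q2 := fun x => by
    rw [← ENNReal.rpow_mul]
    congr 1
    rw [ht_def, mul_comm, div_mul_cancel₀ _ h0.ne']
  simp only [hq1t] at key
  have key2 := ENNReal.rpow_le_rpow key (le_of_lt (by positivity : (0:ℝ) < 1/q1))
  rw [ENNReal.mul_rpow_of_nonneg _ _ (by positivity : (0:ℝ) ≤ 1/q1),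
    ← ENNReal.rpow_mul, ← ENNReal.rpow_mul] at key2
  have hsub : q2 - q1 ≠ 0 := sub_ne_zero.2 (ne_of_gt h12)
  have e2 : (1/t) * (1/q1) = 1/q2 := by
    rw [ht_def]; field_simp
  have hconj_inv : 1/(Real.conjExponent t) = 1 - 1/t := by
    have h := hconj.inv_add_inv_eq_one
    rw [one_div, one_div]
    linarith
  have e3 : (1/(Real.conjExponent t)) * (1/q1) = 1/q1 - 1/q2 := by
    rw [hconj_inv, sub_mul, one_mul, e2]
  rw [e2, e3] at key2
  exact key2.trans_eq (mul_comm _ _)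

lemma key_ineq (A B : ℝ≥0∞) (hA0 : A ≠ 0) (hAt : A ≠ ⊤) (hB0 : B ≠ 0) (hBt : B ≠ ⊤)
    (N M e1 e2 d d' x1 x2 τ E F G : ℝ) (hd : 0 ≤ d) (hd' : 0 ≤ d') (hN : 0 ≤ N)
    (hE : τ * (N * e1) + x1 + x2 + τ * (N * d') ≤ E)
    (hF : N * e1 + N * d + N * d' = F) (hG : M * e2 + M * d + M * d' = G) :
    (((2:ℝ≥0∞) ^ τ * A) ^ N) ^ e1 * (B ^ M) ^ e2 * (2:ℝ≥0∞) ^ x1 *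
      (A ^ N * B ^ M) ^ d * (((2:ℝ≥0∞) ^ τ * A) ^ N * B ^ M) ^ d' * (2:ℝ≥0∞) ^ x2
      ≤ (2:ℝ≥0∞) ^ E * A ^ F * B ^ G := by
  have h2 : (2:ℝ≥0∞) ≠ 0 := two_ne_zero
  have h2t : (2:ℝ≥0∞) ≠ ⊤ := ENNReal.ofNat_ne_top
  have h2p : (0:ℝ≥0∞) < 2 := by norm_num
  have hsp : ∀ z : ℝ, (((2:ℝ≥0∞) ^ τ * A) ^ N) ^ z
      = (2:ℝ≥0∞) ^ (τ * (N * z)) * A ^ (N * z) := by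
    intro z
    rw [← ENNReal.rpow_mul,
      ENNReal.mul_rpow_of_ne_zero (ENNReal.rpow_pos h2p h2t).ne' hA0,
      ← ENNReal.rpow_mul]
  have hspB : ∀ z : ℝ, ((B:ℝ≥0∞) ^ M) ^ z = B ^ (M * z) := fun z =>
    (ENNReal.rpow_mul B M z).symm
  have key : (((2:ℝ≥0∞) ^ τ * A) ^ N) ^ e1 * (B ^ M) ^ e2 * (2:ℝ≥0∞) ^ x1 *
      (A ^ N * B ^ M) ^ d * (((2:ℝ≥0∞) ^ τ * A) ^ N * B ^ M) ^ d' * (2:ℝ≥0∞) ^ x2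
      = (2:ℝ≥0∞) ^ (τ * (N * e1) + x1 + x2 + τ * (N * d')) * A ^ (N * e1 + N * d + N * d')
        * B ^ (M * e2 + M * d + M * d') := by
    rw [hsp e1, hspB e2, ENNReal.mul_rpow_of_nonneg _ _ hd,
      ← ENNReal.rpow_mul, ← ENNReal.rpow_mul,
      ENNReal.mul_rpow_of_nonneg _ _ hd', hsp d', hspB d',
      ENNReal.rpow_add _ _ h2 h2t, ENNReal.rpow_add _ _ h2 h2t, ENNReal.rpow_add _ _ h2 h2t,
      ENNReal.rpow_add _ _ hA0 hAt, ENNReal.rpow_add _ _ hA0 hAt,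
      ENNReal.rpow_add _ _ hB0 hBt, ENNReal.rpow_add _ _ hB0 hBt]
    ring
  rw [key, hF, hG]
  exact mul_le_mul_left (mul_le_mul_left
    (ENNReal.rpow_le_rpow_of_exponent_le one_le_two hE) _) _



lemma arith_F (n p r s αx : ℝ) (hn : n ≠ 0) (hp : p ≠ 0) (hr : r ≠ 0) (hs : s ≠ 0) :
    n * (αx/n - 1/r) + n * (1/(p*r) - 1/(p*s))
      + n * ((p-1)/(p*r) - (p-1)/(p*s)) = n * (αx/n - 1/s) := by
  field_simp
  ring

lemma arith_E (n α p r s lω μω μσ L : ℝ) (hn : n ≠ 0) (hp : p ≠ 0) (hr : r ≠ 0) (hs : s ≠ 0)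
    (hL : 0 ≤ L) (hαs : α ≤ n / s) (hμ : 1 ≤ μω + μσ) :
    (-L) * (n * (α/n - 1/r)) + L * (α - n/r) * lω + L * (α - n/s) * μσ
      + (-L) * (n * ((p-1)/(p*r) - (p-1)/(p*s)))
      ≤ -L * ((μω - lω) * (α - n/r) + n * (1/r - 1/s) * (μω - 1/p)) := by
  have hkey : -L * ((μω - lω) * (α - n/r) + n * (1/r - 1/s) * (μω - 1/p))
      - ((-L) * (n * (α/n - 1/r)) + L * (α - n/r) * lω + L * (α - n/s) * μσ
        + (-L) * (n * ((p-1)/(p*r) - (p-1)/(p*s))))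
      = L * (n/s - α) * (μω + μσ - 1) := by
    field_simp
    ring
  have h0 : 0 ≤ L * (n/s - α) * (μω + μσ - 1) :=
    mul_nonneg (mul_nonneg hL (by linarith)) (by linarith)
  linarith

/-- Bump comparison with exponent gain: from the ratio bounds on `ω` (at exponent
`pr`, with `λ_ω`) and on `σ⁻¹` (at exponent `ps/(p-1)`, with `μ_σ`), together with
`μ_ω + μ_σ ≥ 1` and `α ≤ n/s`, one gets
`A_{pr}^{αβ}[Q^ℓ × P] ≤ C' 2^{-ℓγ_ω} A_{ps}^{αβ}[Q × P]` with
`γ_ω = (μ_ω-λ_ω)(α-n/r) + n(1/r-1/s)(μ_ω-1/p)`. -/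
theorem stmt14 (n m : ℕ) (hn : 0 < n) (hm : 0 < m) (α β p r s : ℝ)
    (hp : 1 < p) (hr : 1 < r) (hrs : r < s) (hα0 : 0 < α) (hαs : α ≤ n / s)
    (hβ0 : 0 < β) (hβm : β < m)
    (ω σ : En n × En m → ℝ≥0∞) (hω : Measurable ω) (hσ : Measurable σ)
    (C : ℝ≥0∞) (hC0 : 0 < C) (hC : C ≠ ⊤) :
    ∃ C' : ℝ≥0∞, C' ≠ ⊤ ∧
      ∀ (cQ : En n) (a : ℝ) (_ : 0 < a) (cP : En m) (b : ℝ) (_ : 0 < b)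
        (ℓ : ℤ) (_ : 0 < ℓ) (lω μω μσ : ℝ)
        (_ : lω ∈ Icc (0:ℝ) 1) (_ : μω ∈ Icc (0:ℝ) 1) (_ : μσ ∈ Icc (0:ℝ) 1)
        (_ : 1 ≤ μω + μσ),
        ((∫⁻ z in cube cQ ((2:ℝ) ^ (-ℓ) * a) ×ˢ cube cP b, ω z ^ (p * r)) ^ (1 / (p * r)) ≤
          C * (2:ℝ≥0∞) ^ ((ℓ:ℝ) * (α - n / r) * lω) *
            (∫⁻ z in cube cQ a ×ˢ cube cP b, ω z ^ (p * r)) ^ (1 / (p * r))) →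
        ((∫⁻ z in cube cQ ((2:ℝ) ^ (-ℓ) * a) ×ˢ cube cP b,
              (σ z)⁻¹ ^ (p * s / (p - 1))) ^ ((p - 1) / (p * s)) ≤
          C * (2:ℝ≥0∞) ^ ((ℓ:ℝ) * (α - n / s) * μσ) *
            (∫⁻ z in cube cQ a ×ˢ cube cP b,
              (σ z)⁻¹ ^ (p * s / (p - 1))) ^ ((p - 1) / (p * s))) →
        Aloc n m α β p r ω σ (cube cQ ((2:ℝ) ^ (-ℓ) * a)) (cube cP b) ≤
          C' * (2:ℝ≥0∞) ^ (-(ℓ:ℝ) *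
              ((μω - lω) * (α - n / r) + n * (1 / r - 1 / s) * (μω - 1 / p))) *
            Aloc n m α β p s ω σ (cube cQ a) (cube cP b) := by
  have hp0 : (0:ℝ) < p := lt_trans one_pos hp
  have hr0 : (0:ℝ) < r := lt_trans one_pos hr
  have hs0 : (0:ℝ) < s := lt_trans hr0 hrs
  have hp1 : (0:ℝ) < p - 1 := by linarith
  have hn0 : (0:ℝ) < n := by exact_mod_cast hn
  have hm0 : (0:ℝ) < m := by exact_mod_cast hm
  have hn' : (n:ℝ) ≠ 0 := hn0.ne'
  have hm' : (m:ℝ) ≠ 0 := hm0.ne'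
  have hp' : p ≠ 0 := hp0.ne'
  have hr' : r ≠ 0 := hr0.ne'
  have hs' : s ≠ 0 := hs0.ne'
  have hp1' : p - 1 ≠ 0 := hp1.ne'
  have hpr0 : (0:ℝ) < p * r := mul_pos hp0 hr0
  have hps0 : (0:ℝ) < p * s := mul_pos hp0 hs0
  have hprs : p * r < p * s := by nlinarith
  refine ⟨C * C, ENNReal.mul_ne_top hC hC, ?_⟩
  intro cQ a ha cP b hb ℓ hℓ lω μω μσ hlω hμω hμσ hμ h1 h2
  have hu : (0:ℝ) < (2:ℝ) ^ (-ℓ) := by positivity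
  have hua : 0 < (2:ℝ) ^ (-ℓ) * a := mul_pos hu ha
  have hℓ0 : (0:ℝ) ≤ (ℓ:ℝ) := by exact_mod_cast hℓ.le
  set A := ENNReal.ofReal (2 * a) with hA_def
  set B := ENNReal.ofReal (2 * b) with hB_def
  have hA0 : A ≠ 0 := by
    rw [hA_def]; exact (ENNReal.ofReal_pos.2 (by linarith)).ne'
  have hAt : A ≠ ⊤ := by rw [hA_def]; exact ENNReal.ofReal_ne_top
  have hB0 : B ≠ 0 := by
    rw [hB_def]; exact (ENNReal.ofReal_pos.2 (by linarith)).ne'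
  have hBt : B ≠ ⊤ := by rw [hB_def]; exact ENNReal.ofReal_ne_top
  have hT : ENNReal.ofReal (2 * ((2:ℝ) ^ (-ℓ) * a)) = (2:ℝ≥0∞) ^ (-(ℓ:ℝ)) * A := by
    rw [show 2 * ((2:ℝ) ^ (-ℓ) * a) = ((2:ℝ) ^ (-ℓ)) * (2 * a) by ring,
      ENNReal.ofReal_mul hu.le,
      show ((2:ℝ) ^ (-ℓ)) = (2:ℝ) ^ (-(ℓ:ℝ)) by
        rw [← Real.rpow_intCast 2 (-ℓ)]; norm_num,
      ← ENNReal.ofReal_rpow_of_pos (by norm_num : (0:ℝ) < 2), ← hA_def, ENNReal.ofReal_ofNat]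
  have hvQ : volume (cube cQ a) = A ^ ((n:ℝ)) := by
    rw [vol_cube n cQ ha.le, ← hA_def, ← ENNReal.rpow_natCast]
  have hvP : volume (cube cP b) = B ^ ((m:ℝ)) := by
    rw [vol_cube m cP hb.le, ← hB_def, ← ENNReal.rpow_natCast]
  have hvQl : volume (cube cQ ((2:ℝ) ^ (-ℓ) * a))
      = ((2:ℝ≥0∞) ^ (-(ℓ:ℝ)) * A) ^ ((n:ℝ)) := by
    rw [vol_cube n cQ hua.le, hT, ← ENNReal.rpow_natCast]
  have hvR : volume ((cube cQ a) ×ˢ (cube cP b)) = A ^ ((n:ℝ)) * B ^ ((m:ℝ)) := by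
    rw [Measure.volume_eq_prod, Measure.prod_prod, hvQ, hvP]
  have hvRl : volume ((cube cQ ((2:ℝ) ^ (-ℓ) * a)) ×ˢ (cube cP b))
      = ((2:ℝ≥0∞) ^ (-(ℓ:ℝ)) * A) ^ ((n:ℝ)) * B ^ ((m:ℝ)) := by
    rw [Measure.volume_eq_prod, Measure.prod_prod, hvQl, hvP]
  -- Hölder on ω over Q × P
  have hWr : (∫⁻ z in (cube cQ a ×ˢ cube cP b), ω z ^ (p*r)) ^ (1/(p*r)) ≤
      (A ^ ((n:ℝ)) * B ^ ((m:ℝ))) ^ (1/(p*r) - 1/(p*s)) *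
      (∫⁻ z in (cube cQ a ×ˢ cube cP b), ω z ^ (p*s)) ^ (1/(p*s)) := by
    have h := holder_aux (volume.restrict (cube cQ a ×ˢ cube cP b)) ω hω hpr0 hprs
    rwa [Measure.restrict_apply_univ, hvR] at h
  -- Hölder on σ⁻¹ over Qℓ × P
  have hSl : (∫⁻ z in (cube cQ ((2:ℝ) ^ (-ℓ) * a) ×ˢ cube cP b),
        (σ z)⁻¹ ^ (p*r/(p-1))) ^ ((p-1)/(p*r)) ≤
      (((2:ℝ≥0∞) ^ (-(ℓ:ℝ)) * A) ^ ((n:ℝ)) * B ^ ((m:ℝ))) ^ ((p-1)/(p*r) - (p-1)/(p*s)) *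
      (∫⁻ z in (cube cQ ((2:ℝ) ^ (-ℓ) * a) ×ˢ cube cP b),
        (σ z)⁻¹ ^ (p*s/(p-1))) ^ ((p-1)/(p*s)) := by
    have hq1 : 0 < p*r/(p-1) := div_pos hpr0 hp1
    have hq12 : p*r/(p-1) < p*s/(p-1) := by
      rw [div_lt_div_iff₀ hp1 hp1]
      nlinarith
    have h := holder_aux
      (volume.restrict (cube cQ ((2:ℝ) ^ (-ℓ) * a) ×ˢ cube cP b))
      (fun z => (σ z)⁻¹) hσ.inv hq1 hq12
    rwa [Measure.restrict_apply_univ, hvRl, one_div_div, one_div_div] at h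
  have hW : (∫⁻ z in cube cQ ((2:ℝ) ^ (-ℓ) * a) ×ˢ cube cP b, ω z ^ (p * r)) ^ (1 / (p * r)) ≤
      C * (2:ℝ≥0∞) ^ ((ℓ:ℝ) * (α - (n:ℝ) / r) * lω) *
        ((A ^ ((n:ℝ)) * B ^ ((m:ℝ))) ^ (1/(p*r) - 1/(p*s)) *
         (∫⁻ z in cube cQ a ×ˢ cube cP b, ω z ^ (p*s)) ^ (1/(p*s))) :=
    h1.trans (mul_le_mul_right hWr _)
  have hS : (∫⁻ z in cube cQ ((2:ℝ) ^ (-ℓ) * a) ×ˢ cube cP b,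
        (σ z)⁻¹ ^ (p*r/(p-1))) ^ ((p-1)/(p*r)) ≤
      (((2:ℝ≥0∞) ^ (-(ℓ:ℝ)) * A) ^ ((n:ℝ)) * B ^ ((m:ℝ))) ^ ((p-1)/(p*r) - (p-1)/(p*s)) *
        (C * (2:ℝ≥0∞) ^ ((ℓ:ℝ) * (α - (n:ℝ) / s) * μσ) *
          (∫⁻ z in cube cQ a ×ˢ cube cP b, (σ z)⁻¹ ^ (p*s/(p-1))) ^ ((p-1)/(p*s))) :=
    hSl.trans (mul_le_mul_right h2 _)
  have hd : (0:ℝ) ≤ 1/(p*r) - 1/(p*s) := by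
    have := one_div_le_one_div_of_le hpr0 hprs.le
    linarith
  have hd' : (0:ℝ) ≤ (p-1)/(p*r) - (p-1)/(p*s) := by
    have : (p-1)/(p*s) ≤ (p-1)/(p*r) := by
      rw [div_le_div_iff₀ hps0 hpr0]
      nlinarith
    linarith
  have hE := arith_E (n:ℝ) α p r s lω μω μσ (ℓ:ℝ) hn' hp' hr' hs' hℓ0 hαs hμ
  have hF := arith_F (n:ℝ) p r s α hn' hp' hr' hs'
  have hG := arith_F (m:ℝ) p r s β hm' hp' hr' hs'
  have hkeyineq := key_ineq A B hA0 hAt hB0 hBt (n:ℝ) (m:ℝ) (α/(n:ℝ) - 1/r) (β/(m:ℝ) - 1/r)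
      (1/(p*r) - 1/(p*s)) ((p-1)/(p*r) - (p-1)/(p*s))
      ((ℓ:ℝ) * (α - (n:ℝ)/r) * lω) ((ℓ:ℝ) * (α - (n:ℝ)/s) * μσ)
      (-(ℓ:ℝ))
      (-(ℓ:ℝ) * ((μω - lω) * (α - (n:ℝ)/r) + (n:ℝ) * (1/r - 1/s) * (μω - 1/p)))
      ((n:ℝ) * (α/(n:ℝ) - 1/s)) ((m:ℝ) * (β/(m:ℝ) - 1/s))
      hd hd' (Nat.cast_nonneg n) hE hF hG
  simp only [Aloc, Bloc]
  rw [hvQl, hvP, hvQ]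
  set Wl := (∫⁻ z in cube cQ ((2:ℝ) ^ (-ℓ) * a) ×ˢ cube cP b, ω z ^ (p * r)) ^ (1 / (p * r)) with hWl_def
  set Sl := (∫⁻ z in cube cQ ((2:ℝ) ^ (-ℓ) * a) ×ˢ cube cP b, (σ z)⁻¹ ^ (p * r / (p - 1))) ^ ((p - 1) / (p * r)) with hSl_def
  set Ws := (∫⁻ z in cube cQ a ×ˢ cube cP b, ω z ^ (p * s)) ^ (1 / (p * s)) with hWs_def
  set Ss := (∫⁻ z in cube cQ a ×ˢ cube cP b, (σ z)⁻¹ ^ (p * s / (p - 1))) ^ ((p - 1) / (p * s)) with hSs_def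
  calc (((2:ℝ≥0∞) ^ (-(ℓ:ℝ)) * A) ^ ((n:ℝ))) ^ (α/(n:ℝ) - 1/r)
        * (B ^ ((m:ℝ))) ^ (β/(m:ℝ) - 1/r) * (Wl * Sl)
      ≤ (((2:ℝ≥0∞) ^ (-(ℓ:ℝ)) * A) ^ ((n:ℝ))) ^ (α/(n:ℝ) - 1/r)
        * (B ^ ((m:ℝ))) ^ (β/(m:ℝ) - 1/r) *
        ((C * (2:ℝ≥0∞) ^ ((ℓ:ℝ) * (α - (n:ℝ)/r) * lω) *
            ((A ^ ((n:ℝ)) * B ^ ((m:ℝ))) ^ (1/(p*r) - 1/(p*s)) * Ws)) *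
         ((((2:ℝ≥0∞) ^ (-(ℓ:ℝ)) * A) ^ ((n:ℝ)) * B ^ ((m:ℝ))) ^ ((p-1)/(p*r) - (p-1)/(p*s)) *
            (C * (2:ℝ≥0∞) ^ ((ℓ:ℝ) * (α - (n:ℝ)/s) * μσ) * Ss))) :=
        mul_le_mul_right (mul_le_mul' hW hS) _
    _ = ((((2:ℝ≥0∞) ^ (-(ℓ:ℝ)) * A) ^ ((n:ℝ))) ^ (α/(n:ℝ) - 1/r)
          * (B ^ ((m:ℝ))) ^ (β/(m:ℝ) - 1/r)
          * (2:ℝ≥0∞) ^ ((ℓ:ℝ) * (α - (n:ℝ)/r) * lω)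
          * (A ^ ((n:ℝ)) * B ^ ((m:ℝ))) ^ (1/(p*r) - 1/(p*s))
          * (((2:ℝ≥0∞) ^ (-(ℓ:ℝ)) * A) ^ ((n:ℝ)) * B ^ ((m:ℝ))) ^ ((p-1)/(p*r) - (p-1)/(p*s))
          * (2:ℝ≥0∞) ^ ((ℓ:ℝ) * (α - (n:ℝ)/s) * μσ)) * ((C * C) * (Ws * Ss)) := by
        ring
    _ ≤ ((2:ℝ≥0∞) ^ (-(ℓ:ℝ) * ((μω - lω) * (α - (n:ℝ)/r) + (n:ℝ) * (1/r - 1/s) * (μω - 1/p)))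
          * A ^ ((n:ℝ) * (α/(n:ℝ) - 1/s)) * B ^ ((m:ℝ) * (β/(m:ℝ) - 1/s))) * ((C * C) * (Ws * Ss)) :=
        mul_le_mul_left hkeyineq _
    _ = C * C * (2:ℝ≥0∞) ^ (-(ℓ:ℝ) * ((μω - lω) * (α - (n:ℝ)/r) + (n:ℝ) * (1/r - 1/s) * (μω - 1/p)))
          * ((A ^ ((n:ℝ))) ^ (α/(n:ℝ) - 1/s) * (B ^ ((m:ℝ))) ^ (β/(m:ℝ) - 1/s) * (Ws * Ss)) := by
        rw [ENNReal.rpow_mul A, ENNReal.rpow_mul B]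
        ring
end
end
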